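/- arXiv:1511.05479 — 3 statements merged into one kernel-verified Lean document; each statement's English description precedes it below -/
import Mathlib

section
/- For a finite point set P in a metric space X and integer k ≥ 1 with k ≤ |P|, the k-distance function d_{P,k}(x) = sqrt((1/k) Σ_{i=1}^k d(x, p_i(x))²), where p_i(x) is the i-th nearest neighbor of x in P, is 1-Lipschitz: |d_{P,k}(x) - d_{P,k}(y)| ≤ d(x,y) for all x, y ∈ X. -/
open Metric

/-- Core loop of the Declutter algorithm: scan the (pre-sorted) list, keeping a point `p`
iff no previously kept point lies in the open ball `B(p, 2 f p)` (w.r.t. distance `d`). -/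
noncomputable def declutterAux {X : Type*} (d : X → X → ℝ) (f : X → ℝ) :
    List X → List X → List X
  | Q, [] => Q
  | Q, p :: rest =>
    if ∀ q ∈ Q, 2 * f p ≤ d p q then declutterAux d f (Q ++ [p]) rest
    else declutterAux d f Q rest

noncomputable def declutter {X : Type*} (d : X → X → ℝ) (f : X → ℝ) (L : List X) : List X :=
  declutterAux d f [] L

/-- `Q` is a possible output of the Declutter algorithm on `P`, with robust distance
function `f`: the points of `P` are processed in nondecreasing order of `f`
(ties broken arbitrarily). -/
def IsDeclutterOutput {X : Type*} (d : X → X → ℝ) (f : X → ℝ) (P : Finset X)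
    (Q : List X) : Prop :=
  ∃ L : List X, L.Perm P.toList ∧ L.Pairwise (fun a b => f a ≤ f b) ∧ Q = declutter d f L

variable {X : Type*} [MetricSpace X]

/-- Sorted (nondecreasing) list of distances from `x` to the points of `P`. -/
noncomputable def sortedDists (P : Finset X) (x : X) : List ℝ :=
  (P.val.map (dist x)).sort (· ≤ ·)

/-- The k-distance: root mean square of the distances to the k nearest neighbors in `P`. -/
noncomputable def kdist (P : Finset X) (k : ℕ) (x : X) : ℝ :=
  Real.sqrt ((1 / (k : ℝ)) * (((sortedDists P x).take k).map (fun r => r ^ 2)).sum)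

/-- `P` is an ε_k-noisy sample of `K`:
(1) the k-distance is at most ε on `K`; (2) every point of the space is within
`kdist + ε` of `K`. -/
def NoisySample (P : Finset X) (k : ℕ) (K : Set X) (ε : ℝ) : Prop :=
  (∀ x ∈ K, kdist P k x ≤ ε) ∧ ∀ x : X, infDist x K ≤ kdist P k x + ε

/-- In a sorted list, if more than `i` elements are `≤ b`, then the `i`-th element is `≤ b`. -/
lemma get_le_of_lt_countP {L : List ℝ} (hL : L.Pairwise (· ≤ ·)) {i : ℕ} (hi : i < L.length)
    {b : ℝ} (h : i < L.countP (fun r => decide (r ≤ b))) : L.get ⟨i, hi⟩ ≤ b := by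
  by_contra hb
  push_neg at hb
  have hsplit : L.countP (fun r => decide (r ≤ b))
      = (L.take i).countP (fun r => decide (r ≤ b))
        + (L.drop i).countP (fun r => decide (r ≤ b)) := by
    rw [← List.countP_append, List.take_append_drop]
  have hdrop : (L.drop i).countP (fun r => decide (r ≤ b)) = 0 := by
    rw [List.countP_eq_zero]
    intro a ha
    obtain ⟨j, hj⟩ := List.get_of_mem ha
    have hle : L.get ⟨i, hi⟩ ≤ a := by
      have := hL.rel_get_of_le (a := ⟨i, hi⟩)
        (b := ⟨i + j.1, by have := j.2; simp [List.length_drop] at this; omega⟩) (by simp)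
      rw [← hj]
      simpa [List.getElem_drop] using this
    simp only [decide_eq_true_eq]
    intro hab
    exact absurd (hle.trans hab) (not_le.mpr hb)
  have htake : (L.take i).countP (fun r => decide (r ≤ b)) ≤ i := by
    calc (L.take i).countP _ ≤ (L.take i).length := List.countP_le_length
    _ ≤ i := by simp
  omega

/-- Conversely, if the `i`-th element of a sorted list is `≤ b`, then more than `i`
elements are `≤ b`. -/
lemma lt_countP_of_get_le {L : List ℝ} (hL : L.Pairwise (· ≤ ·)) {i : ℕ} (hi : i < L.length)
    {b : ℝ} (h : L.get ⟨i, hi⟩ ≤ b) : i < L.countP (fun r => decide (r ≤ b)) := by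
  have hsplit : L.countP (fun r => decide (r ≤ b))
      = (L.take (i+1)).countP (fun r => decide (r ≤ b))
        + (L.drop (i+1)).countP (fun r => decide (r ≤ b)) := by
    rw [← List.countP_append, List.take_append_drop]
  have htake : (L.take (i+1)).countP (fun r => decide (r ≤ b)) = i + 1 := by
    have hlen : (L.take (i+1)).length = i + 1 := by simp; omega
    have hall : ∀ a ∈ L.take (i+1), decide (a ≤ b) = true := by
      intro a ha
      obtain ⟨j, hj⟩ := List.get_of_mem ha
      have hja : j.1 ≤ i := by
        have h2 := j.2; simp only [List.length_take] at h2; omega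
      have : a ≤ L.get ⟨i, hi⟩ := by
        rw [← hj]
        have := hL.rel_get_of_le (a := ⟨j.1, by omega⟩) (b := ⟨i, hi⟩) (by simpa)
        simpa [List.getElem_take] using this
      simp only [decide_eq_true_eq]
      exact this.trans h
    rw [List.countP_eq_length.mpr hall, hlen]
  omega

lemma length_sortedDists (P : Finset X) (x : X) : (sortedDists P x).length = P.card := by
  rw [sortedDists, Multiset.length_sort, Multiset.card_map]; rfl

lemma sorted_sortedDists (P : Finset X) (x : X) : (sortedDists P x).Pairwise (· ≤ ·) :=
  Multiset.pairwise_sort _ _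

lemma countP_sortedDists (P : Finset X) (x : X) (b : ℝ) :
    (sortedDists P x).countP (fun r => decide (r ≤ b))
      = Multiset.countP (fun r => r ≤ b) (P.val.map (dist x)) := by
  rw [← Multiset.coe_countP, sortedDists, Multiset.sort_eq]

/-- The i-th sorted distance is 1-Lipschitz in the base point. -/
lemma sortedDists_get_le (P : Finset X) (x y : X) {i : ℕ} (hix : i < (sortedDists P x).length)
    (hiy : i < (sortedDists P y).length) :
    (sortedDists P x).get ⟨i, hix⟩ ≤ (sortedDists P y).get ⟨i, hiy⟩ + dist x y := by
  set b := (sortedDists P y).get ⟨i, hiy⟩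
  have h1 : i < (sortedDists P y).countP (fun r => decide (r ≤ b)) :=
    lt_countP_of_get_le (sorted_sortedDists P y) hiy le_rfl
  have h2 : (sortedDists P y).countP (fun r => decide (r ≤ b))
      ≤ (sortedDists P x).countP (fun r => decide (r ≤ b + dist x y)) := by
    rw [countP_sortedDists, countP_sortedDists, Multiset.countP_map, Multiset.countP_map]
    apply Multiset.card_le_card
    apply Multiset.monotone_filter_right
    intro p hp
    calc dist x p ≤ dist y p + dist x y := by
          rw [dist_comm x p]
          calc dist p x ≤ dist p y + dist y x := dist_triangle _ _ _
          _ = dist y p + dist x y := by rw [dist_comm p y, dist_comm y x]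
    _ ≤ b + dist x y := by linarith
  exact get_le_of_lt_countP (sorted_sortedDists P x) hix (lt_of_lt_of_le h1 h2)


/-- The k-distance function is 1-Lipschitz. -/
theorem kdist_one_lipschitz (P : Finset X) (hP : P.Nonempty) (k : ℕ)
    (hk : 1 ≤ k) (hkP : k ≤ P.card) (x y : X) :
    |kdist P k x - kdist P k y| ≤ dist x y := by
  have hlx : k ≤ (sortedDists P x).length := by rw [length_sortedDists]; exact hkP
  have hly : k ≤ (sortedDists P y).length := by rw [length_sortedDists]; exact hkP
  set u : EuclideanSpace ℝ (Fin k) := WithLp.toLp 2 (fun i : Fin k => (sortedDists P x).get ⟨i.1, lt_of_lt_of_le i.2 hlx⟩)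
  set v : EuclideanSpace ℝ (Fin k) := WithLp.toLp 2 (fun i : Fin k => (sortedDists P y).get ⟨i.1, lt_of_lt_of_le i.2 hly⟩)
  have hk0 : (0:ℝ) < Real.sqrt k := Real.sqrt_pos.mpr (by exact_mod_cast hk)
  -- express kdist as a norm
  have key : ∀ (z : X) (hlz : k ≤ (sortedDists P z).length) (w : EuclideanSpace ℝ (Fin k)),
      (∀ i : Fin k, w i = (sortedDists P z).get ⟨i.1, lt_of_lt_of_le i.2 hlz⟩) →
      kdist P k z = ‖w‖ / Real.sqrt k := by
    intro z hlz w hw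
    have hsum : (((sortedDists P z).take k).map (fun r => r ^ 2)).sum
        = ∑ i : Fin k, ((sortedDists P z).get ⟨i.1, lt_of_lt_of_le i.2 hlz⟩) ^ 2 := by
      rw [← List.sum_ofFn]
      congr 1
      apply List.ext_getElem
      · simp; omega
      · intro n h1 h2
        simp [List.getElem_take]
    have hnn : (0:ℝ) ≤ (((sortedDists P z).take k).map (fun r => r ^ 2)).sum := by
      apply List.sum_nonneg
      intro a ha
      simp only [List.mem_map] at ha
      obtain ⟨r, _, hr⟩ := ha
      rw [← hr]; positivity
    have hw2 : ∑ i : Fin k, ‖w i‖ ^ 2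
        = (((sortedDists P z).take k).map (fun r => r ^ 2)).sum := by
      rw [hsum]
      apply Finset.sum_congr rfl
      intro i _
      rw [hw i, Real.norm_eq_abs, sq_abs]
    rw [kdist, EuclideanSpace.norm_eq, hw2, ← Real.sqrt_div hnn, one_div, inv_mul_eq_div]
  rw [key x hlx u (fun _ => rfl), key y hly v (fun _ => rfl), div_sub_div_same, abs_div, abs_of_pos hk0, div_le_iff₀ hk0]
  calc |‖u‖ - ‖v‖| ≤ ‖u - v‖ := abs_norm_sub_norm_le u v
  _ ≤ Real.sqrt (∑ _i : Fin k, dist x y ^ 2) := by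
      rw [EuclideanSpace.norm_eq]
      apply Real.sqrt_le_sqrt
      apply Finset.sum_le_sum
      intro i _
      have h1 := sortedDists_get_le P x y (lt_of_lt_of_le i.2 hlx) (lt_of_lt_of_le i.2 hly)
      have h2 := sortedDists_get_le P y x (lt_of_lt_of_le i.2 hly) (lt_of_lt_of_le i.2 hlx)
      rw [dist_comm y x] at h2
      have hb1 : u i - v i ≤ dist x y := sub_le_iff_le_add'.mpr h1
      have hb2 : v i - u i ≤ dist x y := sub_le_iff_le_add'.mpr h2
      have habs : |u i - v i| ≤ dist x y := abs_sub_le_iff.mpr ⟨hb1, hb2⟩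
      calc ‖(u - v) i‖ ^ 2 = |u i - v i| ^ 2 := by
            simp [Real.norm_eq_abs]
      _ ≤ dist x y ^ 2 := by
            exact pow_le_pow_left₀ (abs_nonneg _) habs 2
  _ = dist x y * Real.sqrt k := by
      rw [Finset.sum_const, Finset.card_univ, Fintype.card_fin, nsmul_eq_mul,
        Real.sqrt_mul (by positivity), Real.sqrt_sq dist_nonneg, mul_comm]
end

section
/- Let P be an ε_k-noisy sample of a compact set K in a metric space X, and let Q be the output of the Declutter algorithm on (P,k). Then for every q ∈ Q there exists x ∈ K with d(q,x) ≤ 7ε_k. -/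
open Metric

variable {X : Type*} [MetricSpace X]

section ListLemmas
open List

-- sorted get from count
lemma sorted_get_le_of_countP {l : List ℝ} (hl : l.Pairwise (· ≤ ·)) {i : ℕ} (hi : i < l.length)
    {v : ℝ} (hc : i + 1 ≤ l.countP (fun a => decide (a ≤ v))) : l.get ⟨i, hi⟩ ≤ v := by
  by_contra hlt
  push_neg at hlt
  have hdrop : (l.drop i).countP (fun a => decide (a ≤ v)) = 0 := by
    rw [List.countP_eq_zero]
    intro a ha
    rw [List.mem_iff_getElem] at ha
    obtain ⟨j, hj, rfl⟩ := ha
    have hj' : i + j < l.length := by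
      have := List.length_drop (i := i) (l := l)
      omega
    have : (l.drop i)[j] = l.get ⟨i + j, hj'⟩ := by
      simp [List.getElem_drop]
    rw [this]
    have : l.get ⟨i, hi⟩ ≤ l.get ⟨i + j, hj'⟩ := hl.rel_get_of_le (by simp)
    simp only [decide_eq_true_eq]
    push_neg
    linarith
  have : l.countP (fun a => decide (a ≤ v)) ≤ i := by
    conv_lhs => rw [← List.take_append_drop i l]
    rw [List.countP_append, hdrop]
    have := List.countP_le_length (p := fun a => decide (a ≤ v)) (l := l.take i)
    simp only [List.length_take] at this
    omega
  omega

-- count lower bound at index i of sorted list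
lemma countP_ge_of_sorted_get {l : List ℝ} (hl : l.Pairwise (· ≤ ·)) {i : ℕ} (hi : i < l.length) :
    i + 1 ≤ l.countP (fun a => decide (a ≤ l.get ⟨i, hi⟩)) := by
  obtain ⟨v, hv⟩ : ∃ v, l.get ⟨i, hi⟩ = v := ⟨_, rfl⟩
  rw [hv]
  have htake : (l.take (i+1)).countP (fun a => decide (a ≤ v)) = i + 1 := by
    rw [List.countP_eq_length.2, List.length_take]
    · omega
    · intro a ha
      rw [List.mem_take_iff_getElem] at ha
      obtain ⟨j, hj, rfl⟩ := ha
      have hj' : j < l.length := lt_of_lt_of_le (lt_of_lt_of_le hj inf_le_right) le_rfl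
      have : l[j] = l.get ⟨j, hj'⟩ := rfl
      rw [this]
      simp only [decide_eq_true_eq]
      rw [← hv]
      exact hl.rel_get_of_le (by simp; omega)
  conv_rhs => rw [← List.take_append_drop (i+1) l]
  rw [List.countP_append, htake]
  omega

end ListLemmas

lemma sort_perm_map {α : Type*} (s : Multiset α) (f : α → ℝ) :
    ((s.map f).sort (· ≤ ·)).Perm (s.toList.map f) := by
  rw [← Multiset.coe_eq_coe, Multiset.sort_eq]
  conv_lhs => rw [← Multiset.coe_toList s]
  rw [Multiset.map_coe]

lemma get_sort_map_le {α : Type*} (s : Multiset α) (f g : α → ℝ) (c : ℝ)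
    (h : ∀ a ∈ s, f a ≤ g a + c) {i : ℕ}
    (h₁ : i < ((s.map f).sort (· ≤ ·)).length) (h₂ : i < ((s.map g).sort (· ≤ ·)).length) :
    ((s.map f).sort (· ≤ ·)).get ⟨i, h₁⟩ ≤ ((s.map g).sort (· ≤ ·)).get ⟨i, h₂⟩ + c := by
  set A := (s.map f).sort (· ≤ ·) with hA
  set B := (s.map g).sort (· ≤ ·) with hB
  obtain ⟨v, hv⟩ : ∃ v, B.get ⟨i, h₂⟩ = v := ⟨_, rfl⟩
  rw [hv]
  have hcount : i + 1 ≤ B.countP (fun a => decide (a ≤ v)) := hv ▸ countP_ge_of_sorted_get (Multiset.pairwise_sort _ _) h₂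
  have hBc : B.countP (fun a => decide (a ≤ v)) = s.toList.countP (fun a => decide (g a ≤ v)) := by
    rw [(sort_perm_map s g).countP_eq, List.countP_map]
    rfl
  have hAc : A.countP (fun a => decide (a ≤ v + c)) = s.toList.countP (fun a => decide (f a ≤ v + c)) := by
    rw [(sort_perm_map s f).countP_eq, List.countP_map]
    rfl
  have hmono : s.toList.countP (fun a => decide (g a ≤ v)) ≤ s.toList.countP (fun a => decide (f a ≤ v + c)) := by
    apply List.countP_mono_left
    intro a ha
    simp only [decide_eq_true_eq]
    intro hg
    have := h a (by rwa [← Multiset.mem_toList])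
    linarith
  refine sorted_get_le_of_countP (Multiset.pairwise_sort _ _) h₁ ?_
  rw [hBc] at hcount
  rw [hAc]
  omega

lemma list_sq_sum (l : List ℝ) : l.sum ^ 2 ≤ l.length * (l.map (fun r => r ^ 2)).sum := by
  induction l with
  | nil => simp
  | cons a t ih =>
    simp only [List.sum_cons, List.map_cons, List.length_cons]
    push_cast
    have ht : (0:ℝ) ≤ (t.map (fun r => r ^ 2)).sum :=
      List.sum_nonneg (by intro x hx; obtain ⟨r, _, rfl⟩ := List.mem_map.1 hx; positivity)
    rcases t with _ | ⟨b, t'⟩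
    · simp
    · have hn : (1:ℝ) ≤ ((b :: t').length : ℝ) := by simp
      nlinarith [sq_nonneg (((b :: t').length : ℝ) * a - (b :: t').sum)]

lemma list_sum_shift (l : List ℝ) (c : ℝ) :
    ((l.map (fun b => (b + c) ^ 2))).sum = (l.map (fun r => r ^ 2)).sum + 2 * c * l.sum + l.length * c ^ 2 := by
  induction l with
  | nil => simp
  | cons a t ih => simp only [List.map_cons, List.sum_cons, List.length_cons]; push_cast; rw [ih]; ring

lemma list_sum_sq_le {l₁ l₂ : List ℝ} (c : ℝ) (h : List.Forall₂ (fun a b => a ≤ b + c) l₁ l₂)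
    (h0 : ∀ a ∈ l₁, 0 ≤ a) :
    (l₁.map (fun r => r ^ 2)).sum ≤ (l₂.map (fun b => (b + c) ^ 2)).sum := by
  induction h with
  | nil => simp
  | @cons a b t₁ t₂ hab _ ih =>
    simp only [List.map_cons, List.sum_cons]
    have h0a : 0 ≤ a := h0 a (List.mem_cons_self)
    have : a ^ 2 ≤ (b + c) ^ 2 := by nlinarith
    have := ih (fun x hx => h0 x (List.mem_cons_of_mem _ hx))
    linarith

lemma list_le_sum {l : List ℝ} {c : ℝ} (h : ∀ a ∈ l, c ≤ a) : l.length * c ≤ l.sum := by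
  induction l with
  | nil => simp
  | cons a t ih =>
    simp only [List.sum_cons, List.length_cons]
    push_cast
    have := ih (fun x hx => h x (List.mem_cons_of_mem _ hx))
    have := h a (List.mem_cons_self)
    linarith

section DeclutterLemmas
variable {Y : Type*} (d : Y → Y → ℝ) (f : Y → ℝ)

variable {Y : Type*} (d : Y → Y → ℝ) (f : Y → ℝ)

lemma declutterAux_append (Q l₁ l₂ : List Y) :
    declutterAux d f Q (l₁ ++ l₂) = declutterAux d f (declutterAux d f Q l₁) l₂ := by
  induction l₁ generalizing Q with
  | nil => simp [declutterAux]
  | cons p rest ih =>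
    rw [List.cons_append]
    rw [declutterAux, declutterAux]
    split_ifs <;> apply ih

lemma mem_declutterAux_of_mem {a : Y} (Q l : List Y) (h : a ∈ Q) : a ∈ declutterAux d f Q l := by
  induction l generalizing Q with
  | nil => simpa [declutterAux]
  | cons p rest ih =>
    rw [declutterAux]
    split_ifs
    · exact ih _ (List.mem_append_left _ h)
    · exact ih _ h

lemma declutterAux_subset {a : Y} (Q l : List Y) (h : a ∈ declutterAux d f Q l) : a ∈ Q ∨ a ∈ l := by
  induction l generalizing Q with
  | nil => left; simpa [declutterAux] using h
  | cons p rest ih =>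
    rw [declutterAux] at h
    split_ifs at h
    · rcases ih _ h with h' | h'
      · rcases List.mem_append.1 h' with h'' | h''
        · exact Or.inl h''
        · right; simp at h''; simp [h'']
      · right; exact List.mem_cons_of_mem _ h'
    · rcases ih _ h with h' | h'
      · exact Or.inl h'
      · exact Or.inr (List.mem_cons_of_mem _ h')

lemma declutterAux_coverage (hd : ∀ p, d p p = 0) (Q l : List Y) (hf : ∀ p ∈ l, 0 ≤ f p) :
    ∀ p ∈ l, ∃ q ∈ declutterAux d f Q l, d p q ≤ 2 * f p := by
  induction l generalizing Q with
  | nil => intro p hp; simp at hp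
  | cons p' rest ih =>
    intro p hp
    rcases List.mem_cons.1 hp with rfl | hp'
    · rw [declutterAux]
      split_ifs with hc
      · exact ⟨p, mem_declutterAux_of_mem d f _ _ (by simp), by rw [hd]; have := hf p hp; linarith⟩
      · push_neg at hc
        obtain ⟨q, hq, hqd⟩ := hc
        exact ⟨q, mem_declutterAux_of_mem d f _ _ hq, le_of_lt hqd⟩
    · rw [declutterAux]
      split_ifs with hc
      · exact ih _ (fun x hx => hf x (List.mem_cons_of_mem _ hx)) p hp'
      · exact ih _ (fun x hx => hf x (List.mem_cons_of_mem _ hx)) p hp'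

lemma declutterAux_sep (Q l : List Y) :
    ∀ a ∈ Q, ∀ q ∈ declutterAux d f Q l, q ∈ Q ∨ 2 * f q ≤ d q a := by
  induction l generalizing Q with
  | nil => intro a _ q hq; left; simpa [declutterAux] using hq
  | cons p rest ih =>
    intro a ha q hq
    rw [declutterAux] at hq
    split_ifs at hq with hc
    · rcases ih _ a (List.mem_append_left _ ha) q hq with h' | h'
      · rcases List.mem_append.1 h' with h'' | h''
        · exact Or.inl h''
        · simp at h''
          subst h''
          exact Or.inr (hc a ha)
      · exact Or.inr h'
    · exact ih _ a ha q hq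

end DeclutterLemmas

lemma mem_sortedDists_nonneg (P : Finset X) (x : X) {a : ℝ} (ha : a ∈ sortedDists P x) : 0 ≤ a := by
  rw [sortedDists, Multiset.mem_sort, Multiset.mem_map] at ha
  obtain ⟨p, _, rfl⟩ := ha
  exact dist_nonneg

lemma kdist_nonneg (P : Finset X) (k : ℕ) (x : X) : 0 ≤ kdist P k x := Real.sqrt_nonneg _

lemma exists_near (P : Finset X) {k : ℕ} (hk : 1 ≤ k) (hkP : k ≤ P.card) (x : X) :
    ∃ p ∈ P, dist x p ≤ kdist P k x := by
  set A := sortedDists P x with hA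
  have hlen : A.length = P.card := length_sortedDists P x
  have h0 : 0 < A.length := by omega
  set a0 := A.get ⟨0, h0⟩ with ha0
  have ha0mem : a0 ∈ A := A.get_mem ⟨0, h0⟩
  have ha0nn : 0 ≤ a0 := mem_sortedDists_nonneg P x ha0mem
  have := ha0mem
  rw [hA, sortedDists, Multiset.mem_sort, Multiset.mem_map] at this
  obtain ⟨p, hp, hpd⟩ := this
  refine ⟨p, hp, ?_⟩
  rw [hpd]
  have hktake : (A.take k).length = k := by rw [List.length_take]; omega
  have hlb : ∀ b ∈ (A.take k).map (fun r => r ^ 2), a0 ^ 2 ≤ b := by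
    intro b hb
    obtain ⟨r, hr, rfl⟩ := List.mem_map.1 hb
    rw [List.mem_take_iff_getElem] at hr
    obtain ⟨j, hj, rfl⟩ := hr
    have hj' : j < A.length := lt_of_lt_of_le hj (by omega)
    have h1 : A[j] = A.get ⟨j, hj'⟩ := rfl
    have h2 : a0 ≤ A.get ⟨j, hj'⟩ :=
      (Multiset.pairwise_sort _ _).rel_get_of_le (Nat.zero_le _)
    have h3 : 0 ≤ A[j] := mem_sortedDists_nonneg P x (A.get_mem ⟨j, hj'⟩)
    nlinarith
  have hsum : (k : ℝ) * a0 ^ 2 ≤ ((A.take k).map (fun r => r ^ 2)).sum := by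
    have := list_le_sum hlb
    rwa [List.length_map, hktake] at this
  have hk0 : (0 : ℝ) < k := by positivity
  have ha0nn' : 0 ≤ a0 := hpd ▸ ha0nn
  have hkd : kdist P k x = Real.sqrt ((1 / (k : ℝ)) * ((A.take k).map (fun r => r ^ 2)).sum) := rfl
  rw [hkd, show a0 = Real.sqrt (a0 ^ 2) from (Real.sqrt_sq ha0nn').symm]
  apply Real.sqrt_le_sqrt
  rw [one_div, inv_mul_eq_div, le_div_iff₀ hk0]
  linarith

lemma kdist_lipschitz (P : Finset X) {k : ℕ} (hk : 1 ≤ k) (hkP : k ≤ P.card) (x y : X) :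
    kdist P k x ≤ kdist P k y + dist x y := by
  set c := dist x y with hc
  have hc0 : 0 ≤ c := dist_nonneg
  set A := sortedDists P x with hA
  set B := sortedDists P y with hB
  have hlenA : A.length = P.card := length_sortedDists P x
  have hlenB : B.length = P.card := length_sortedDists P y
  have hf2 : List.Forall₂ (fun a b => a ≤ b + c) (A.take k) (B.take k) := by
    rw [List.forall₂_iff_get]
    constructor
    · rw [List.length_take, List.length_take]; omega
    · intro i h₁ h₂
      rw [List.length_take] at h₁ h₂
      have h₁' : i < A.length := by omega
      have h₂' : i < B.length := by omega
      have e₁ : (A.take k).get ⟨i, by rwa [List.length_take]⟩ = A.get ⟨i, h₁'⟩ :=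
        by simp
      have e₂ : (B.take k).get ⟨i, by rwa [List.length_take]⟩ = B.get ⟨i, h₂'⟩ :=
        by simp
      rw [e₁, e₂]
      exact get_sort_map_le P.val (dist x) (dist y) c
        (fun a _ => by have := dist_triangle x y a; rw [hc]; linarith) h₁' h₂'
  set SA := ((A.take k).map (fun r => r ^ 2)).sum with hSA
  set SB := ((B.take k).map (fun r => r ^ 2)).sum with hSB
  set T := (B.take k).sum with hT
  have hktA : (A.take k).length = k := by rw [List.length_take]; omega
  have hktB : (B.take k).length = k := by rw [List.length_take]; omega
  have hSA_le : SA ≤ SB + 2 * c * T + k * c ^ 2 := by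
    have h1 := list_sum_sq_le c hf2
      (fun a ha => mem_sortedDists_nonneg P x (List.mem_of_mem_take ha))
    have h2 := list_sum_shift (B.take k) c
    rw [hktB] at h2
    rw [hSA, hSB, hT]
    rw [h2] at h1
    exact h1
  have hT0 : 0 ≤ T := List.sum_nonneg
    (fun a ha => mem_sortedDists_nonneg P y (List.mem_of_mem_take ha))
  have hSB0 : 0 ≤ SB := List.sum_nonneg
    (by intro b hb; obtain ⟨r, _, rfl⟩ := List.mem_map.1 hb; positivity)
  have hCS : T ^ 2 ≤ k * SB := by
    have := list_sq_sum (B.take k)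
    rwa [hktB] at this
  have hk0 : (0 : ℝ) < k := by positivity
  set R := kdist P k y with hR
  have hR0 : 0 ≤ R := kdist_nonneg P k y
  have hkdy : kdist P k y = Real.sqrt ((1 / (k : ℝ)) * SB) := rfl
  have hkdx : kdist P k x = Real.sqrt ((1 / (k : ℝ)) * SA) := rfl
  have hRsq : R ^ 2 = (1 / (k : ℝ)) * SB := Real.sq_sqrt (by positivity)
  have hTk : T / k ≤ R := by
    rw [hR, hkdy]
    rw [Real.le_sqrt (by positivity) (by positivity)]
    rw [div_pow, one_div, inv_mul_eq_div, div_le_div_iff₀ (by positivity) hk0]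
    nlinarith
  have key : (1 / (k : ℝ)) * SA ≤ (R + c) ^ 2 := by
    have expand : (R + c) ^ 2 = (1 / (k : ℝ)) * SB + 2 * R * c + c ^ 2 := by
      rw [add_sq, hRsq]
    rw [expand]
    have h1 : (1 / (k : ℝ)) * SA ≤ (1 / (k : ℝ)) * (SB + 2 * c * T + k * c ^ 2) := by
      apply mul_le_mul_of_nonneg_left hSA_le (by positivity)
    have h2 : (1 / (k : ℝ)) * (SB + 2 * c * T + k * c ^ 2)
        = (1 / (k : ℝ)) * SB + 2 * c * (T / k) + c ^ 2 := by
      field_simp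
    have h3 : 2 * c * (T / k) ≤ 2 * R * c := by nlinarith
    linarith
  calc kdist P k x = Real.sqrt ((1 / (k : ℝ)) * SA) := hkdx
    _ ≤ Real.sqrt ((R + c) ^ 2) := Real.sqrt_le_sqrt key
    _ = R + c := Real.sqrt_sq (by positivity)


/-- Every point kept by Declutter lies within 7ε of the ground truth `K`. -/
theorem declutter_no_outliers (P : Finset X) (k : ℕ) (hk : 1 ≤ k)
    (hkP : k ≤ P.card) (K : Set X) (hK : IsCompact K) (hKne : K.Nonempty)
    (ε : ℝ) (hsample : NoisySample P k K ε)
    (Q : List X) (hQ : IsDeclutterOutput (fun a b => dist a b) (kdist P k) P Q) :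
    ∀ q ∈ Q, ∃ x ∈ K, dist q x ≤ 7 * ε := by
  obtain ⟨L, hperm, hsort, hQdef⟩ := hQ
  obtain ⟨hs1, hs2⟩ := hsample
  have hε : 0 ≤ ε := by
    obtain ⟨x₀, hx₀⟩ := hKne
    exact le_trans (kdist_nonneg P k x₀) (hs1 x₀ hx₀)
  intro q hq
  obtain ⟨x, hxK, hxd⟩ := hK.exists_infDist_eq_dist hKne q
  set r := kdist P k q with hr
  have hdqx : dist q x ≤ r + ε := by rw [← hxd]; exact hs2 q
  by_cases hcase : r ≤ 2 * ε
  · exact ⟨x, hxK, by linarith⟩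
  · push_neg at hcase
    -- find sample point p near x
    obtain ⟨p, hpP, hpd⟩ := exists_near P hk hkP x
    have hdxp : dist x p ≤ ε := le_trans hpd (hs1 x hxK)
    have hkp : kdist P k p ≤ 2 * ε := by
      have := kdist_lipschitz P hk hkP p x
      rw [dist_comm p x] at this
      have := hs1 x hxK
      linarith
    have hpq : p ≠ q := by
      intro h
      rw [h] at hkp
      rw [← hr] at hkp
      linarith
    have hqL : q ∈ L := by
      rw [hQdef, declutter] at hq
      rcases declutterAux_subset _ _ _ _ hq with h | h
      · simp at h
      · exact h
    have hpL : p ∈ L := hperm.mem_iff.2 (Finset.mem_toList.2 hpP)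
    have hnodup : L.Nodup := hperm.nodup_iff.2 (Finset.nodup_toList P)
    obtain ⟨l₁, l₂, hLeq⟩ := List.append_of_mem hqL
    have hsort' : (q :: l₂).Pairwise (fun a b => kdist P k a ≤ kdist P k b) := by
      rw [hLeq] at hsort
      exact hsort.sublist (List.sublist_append_right _ _)
    have hp1 : p ∈ l₁ := by
      rw [hLeq] at hpL
      rcases List.mem_append.1 hpL with h | h
      · exact h
      · exfalso
        rcases List.mem_cons.1 h with h' | h'
        · exact hpq h'
        · have : kdist P k q ≤ kdist P k p := (List.pairwise_cons.1 hsort').1 p h'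
          rw [← hr] at this
          linarith
    -- split the algorithm run
    have hQsplit : Q = declutterAux (fun a b => dist a b) (kdist P k)
        (declutterAux (fun a b => dist a b) (kdist P k) [] l₁) (q :: l₂) := by
      rw [hQdef, declutter, hLeq, declutterAux_append]
    set Q₁ := declutterAux (fun a b => dist a b) (kdist P k) [] l₁ with hQ₁
    obtain ⟨q', hq'Q₁, hq'd⟩ := declutterAux_coverage (fun a b => dist a b) (kdist P k)
      (fun a => dist_self a) [] l₁ (fun a _ => kdist_nonneg P k a) p hp1
    have hqQ' : q ∈ declutterAux (fun a b => dist a b) (kdist P k) Q₁ (q :: l₂) := by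
      rw [← hQsplit]; exact hq
    have hsep := declutterAux_sep (fun a b => dist a b) (kdist P k) Q₁ (q :: l₂) q' hq'Q₁ q hqQ'
    have hqnotin : q ∉ Q₁ := by
      intro hqin
      rcases declutterAux_subset _ _ _ _ hqin with h | h
      · simp at h
      · have := (List.nodup_append.1 (hLeq ▸ hnodup)).2.2
        exact this q h q List.mem_cons_self rfl
    have h2r : 2 * r ≤ dist q q' := by
      rcases hsep with h | h
      · exact absurd h hqnotin
      · exact h
    have htri : dist q q' ≤ dist q x + dist x p + dist p q' := dist_triangle4 q x p q'
    have hr6 : r ≤ 6 * ε := by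
      have : dist p q' ≤ 2 * kdist P k p := hq'd
      linarith
    exact ⟨x, hxK, by linarith⟩
end

section
/- Let P be an adaptive (ε_k, c)-uniform noisy sample of a compact set K with feature size f, and let Q = {q_1,...,q_m} (indexed in the order Declutter kept them) be the output of Declutter(P,k). Then for any i ≠ j, d(q_i, q_j) ≥ 2(ε_k/c) f(q̄_i), where q̄_i is a nearest point of q_i in K. -/
open Metric

lemma declutterAux_pairwise {X : Type*} (d : X → X → ℝ) (f : X → ℝ) :
    ∀ (L Q0 : List X), Q0.Pairwise (fun a b => 2 * f b ≤ d b a) →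
      (declutterAux d f Q0 L).Pairwise (fun a b => 2 * f b ≤ d b a)
  | [], Q0, h => h
  | p :: rest, Q0, h => by
    rw [declutterAux]
    split
    · rename_i hcond
      exact declutterAux_pairwise d f rest (Q0 ++ [p])
        (List.pairwise_append.mpr ⟨h, List.pairwise_singleton _ _,
          fun a ha b hb => by simp at hb; subst hb; exact hcond a ha⟩)
    · exact declutterAux_pairwise d f rest Q0 h

lemma declutterAux_sublist {X : Type*} (d : X → X → ℝ) (f : X → ℝ) :
    ∀ (L Q0 : List X), ∃ S : List X, S.Sublist L ∧ declutterAux d f Q0 L = Q0 ++ S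
  | [], Q0 => ⟨[], List.nil_sublist _, by simp [declutterAux]⟩
  | p :: rest, Q0 => by
    rw [declutterAux]
    split
    · obtain ⟨S, hS, hEq⟩ := declutterAux_sublist d f rest (Q0 ++ [p])
      exact ⟨p :: S, List.cons_sublist_cons.mpr hS, by simp [hEq]⟩
    · obtain ⟨S, hS, hEq⟩ := declutterAux_sublist d f rest Q0
      exact ⟨S, hS.cons _, hEq⟩

variable {X : Type*} [MetricSpace X]

/-- `P` is an adaptive ε_k-noisy sample of `K` with respect to the feature size `f`. -/
def AdaptiveNoisySample (P : Finset X) (k : ℕ) (K : Set X) (f : X → ℝ) (ε : ℝ) : Prop :=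
  (∀ x ∈ K, kdist P k x ≤ ε * f x) ∧
    ∀ y : X, ∀ ybar ∈ K, (∀ z ∈ K, dist y ybar ≤ dist y z) →
      infDist y K ≤ kdist P k y + ε * f ybar

/-- Adaptive uniform case: the output points of Declutter (in the order they were kept)
are pairwise separated by at least `2 (ε/c) f(q̄ᵢ)`. -/
theorem declutter_output_separated_adaptive (P : Finset X) (k : ℕ) (hk : 1 ≤ k)
    (hkP : k ≤ P.card) (K : Set X) (hK : IsCompact K) (hKne : K.Nonempty)
    (f : X → ℝ) (hfpos : ∀ x ∈ K, 0 < f x)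
    (hflip : ∀ x ∈ K, ∀ y ∈ K, |f x - f y| ≤ dist x y)
    (ε c : ℝ) (hc : 0 < c) (hsample : AdaptiveNoisySample P k K f ε)
    (hunif : ∀ p ∈ P, ∀ pbar ∈ K, (∀ z ∈ K, dist p pbar ≤ dist p z) →
      (ε / c) * f pbar ≤ kdist P k p)
    (Q : List X) (hQ : IsDeclutterOutput (fun a b => dist a b) (kdist P k) P Q) :
    ∀ (i j : ℕ) (hi : i < Q.length) (hj : j < Q.length), i ≠ j →
      ∀ qbar ∈ K, (∀ z ∈ K, dist (Q.get ⟨i, hi⟩) qbar ≤ dist (Q.get ⟨i, hi⟩) z) →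
        2 * (ε / c) * f qbar ≤ dist (Q.get ⟨i, hi⟩) (Q.get ⟨j, hj⟩) := by

  obtain ⟨L, hperm, hsorted, hQdef⟩ := hQ
  obtain ⟨S, hS, hEq⟩ := declutterAux_sublist (fun a b => dist a b) (kdist P k) L []
  have hQS : Q = S := by rw [hQdef, declutter, hEq]; simp
  have hQsub : Q.Sublist L := hQS ▸ hS
  have hpair : Q.Pairwise (fun a b => 2 * kdist P k b ≤ dist b a) := by
    rw [hQdef, declutter]
    exact declutterAux_pairwise _ _ L [] (List.Pairwise.nil)
  have hmemP : ∀ x ∈ Q, x ∈ P := fun x hx =>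
    Finset.mem_toList.mp ((hperm.mem_iff).mp (hQsub.mem hx))
  have hQsorted : Q.Pairwise (fun a b => kdist P k a ≤ kdist P k b) := hsorted.sublist hQsub
  intro i j hi hj hij qbar hqbar hnear
  have h1 : (ε / c) * f qbar ≤ kdist P k (Q.get ⟨i, hi⟩) :=
    hunif _ (hmemP _ (Q.get_mem _)) qbar hqbar hnear
  rcases lt_or_gt_of_ne hij with h | h
  · have h2 : 2 * kdist P k (Q.get ⟨j, hj⟩) ≤ dist (Q.get ⟨j, hj⟩) (Q.get ⟨i, hi⟩) :=
      List.pairwise_iff_get.mp hpair ⟨i, hi⟩ ⟨j, hj⟩ h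
    have h3 : kdist P k (Q.get ⟨i, hi⟩) ≤ kdist P k (Q.get ⟨j, hj⟩) :=
      List.pairwise_iff_get.mp hQsorted ⟨i, hi⟩ ⟨j, hj⟩ h
    rw [dist_comm] at h2
    linarith
  · have h2 : 2 * kdist P k (Q.get ⟨i, hi⟩) ≤ dist (Q.get ⟨i, hi⟩) (Q.get ⟨j, hj⟩) :=
      List.pairwise_iff_get.mp hpair ⟨j, hj⟩ ⟨i, hi⟩ h
    linarith
end
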